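/- arXiv:0809.1891 — 4 statements merged into one kernel-verified Lean document; each statement's English description precedes it below -/
import Mathlib

section
/- The T-basically full closure is idempotent: for any ideals I and T of a commutative ring R, setting I^{Tbf} = (TI : T), one has (T·I^{Tbf} : T) = I^{Tbf}. -/
/-- The `T`-basically full closure is idempotent. -/
theorem T_basically_full_closure_idem {R : Type*} [CommRing R] (T I : Ideal R) :
    (T * ((T * I).colon T)).colon T = (T * I).colon T := by
  have h1 : T * ((T * I).colon T) ≤ T * I := by
    rw [Ideal.mul_le]
    intro t ht y hy
    rw [mul_comm t y]
    have := Submodule.mem_colon.mp hy t ht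
    rwa [smul_eq_mul] at this
  have h2 : T * I ≤ T * ((T * I).colon T) := by
    apply Ideal.mul_mono_right
    intro i hi
    rw [Submodule.mem_colon]
    intro t ht
    rw [smul_eq_mul, mul_comm i t]
    exact Ideal.mul_mem_mul ht hi
  exact le_antisymm (Submodule.colon_mono h1 le_rfl) (Submodule.colon_mono h2 le_rfl)
end

section
/- Let R be a Noetherian local domain with maximal ideal m and let T be a nonzero ideal. If I is an m-primary ideal, then the T-basically full closure (TI : T) is contained in the integral closure of I. -/
/-- `u` is integral over the ideal `I`: it satisfies an equation of integral dependence
`u^n + a_1 u^{n-1} + ⋯ + a_n = 0` with `a_i ∈ I^i`. -/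
def IsIntegralOverIdeal {R : Type*} [CommRing R] (I : Ideal R) (u : R) : Prop :=
  ∃ n : ℕ, 0 < n ∧ ∃ a : ℕ → R, (∀ i, 1 ≤ i → i ≤ n → a i ∈ I ^ i) ∧
    u ^ n + ∑ i ∈ Finset.Icc 1 n, a i * u ^ (n - i) = 0

/-- Let `R` be a Noetherian local domain with maximal ideal `m` and `T` a nonzero ideal.
If `I` is an `m`-primary ideal, then the `T`-basically full closure `(TI : T)` is contained
in the integral closure of `I`. -/
theorem T_basically_full_closure_le_integralClosure {R : Type*} [CommRing R] [IsDomain R]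
    [IsNoetherianRing R] [IsLocalRing R] (T I : Ideal R) (hT : T ≠ ⊥)
    (hIprim : I.IsPrimary) (hIrad : I.radical = IsLocalRing.maximalIdeal R) :
    ∀ u ∈ (T * I).colon T, IsIntegralOverIdeal I u := by
  intro u hu
  haveI : Module.Finite R T := Module.Finite.iff_fg.mpr (IsNoetherian.noetherian T)
  -- multiplication by u as an endomorphism of T
  set f : Module.End R T := Algebra.lsmul R R T u with hf
  have hrange : LinearMap.range f ≤ (I : Ideal R) • (⊤ : Submodule R T) := by
    rintro x ⟨t, rfl⟩
    rw [Submodule.mem_smul_top_iff]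
    have : u • (t : R) ∈ T * I := Submodule.mem_colon.mp hu t t.2
    simpa [hf, Ideal.smul_eq_mul, mul_comm] using this
  obtain ⟨p, hmonic, -, hcoeff, haeval⟩ :=
    LinearMap.exists_monic_and_coeff_mem_pow_and_aeval_eq_zero_of_range_le_smul R f I hrange
  -- deduce p.eval u = 0
  have haeval' : Algebra.lsmul R R T (p.eval u) = 0 := by
    have h1 := Polynomial.aeval_algHom_apply (Algebra.lsmul R R ↥T) u p
    rw [← hf, haeval] at h1
    rw [← Polynomial.coe_aeval_eq_eval, ← h1]
  obtain ⟨t, htT, ht0⟩ := Submodule.exists_mem_ne_zero_of_ne_bot hT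
  have heval : p.eval u = 0 := by
    have := congrArg (fun g : Module.End R T => (g ⟨t, htT⟩ : R)) haeval'
    simp only [Algebra.lsmul_coe, LinearMap.zero_apply] at this
    have h2 : p.eval u * t = 0 := by simpa [smul_eq_mul] using this
    rcases mul_eq_zero.mp h2 with h | h
    · exact h
    · exact absurd h ht0
  set n := p.natDegree with hn
  have hnpos : 0 < n := by
    by_contra hle
    have h0 : n = 0 := Nat.eq_zero_of_not_pos hle
    have : p = 1 := hmonic.natDegree_eq_zero.mp h0
    rw [this] at heval
    simp at heval
  refine ⟨n, hnpos, fun i => p.coeff (n - i), ?_, ?_⟩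
  · intro i hi1 hin
    have := hcoeff (n - i)
    rwa [Nat.sub_sub_self hin] at this
  · have hsum : ∑ i ∈ Finset.Icc 1 n, p.coeff (n - i) * u ^ (n - i)
        = ∑ k ∈ Finset.range n, p.coeff k * u ^ k := by
      refine Finset.sum_nbij' (fun i => n - i) (fun k => n - k) ?_ ?_ ?_ ?_ ?_
      · intro i hi
        simp only [Finset.mem_Icc] at hi
        show n - i ∈ Finset.range n
        exact Finset.mem_range.mpr (by omega)
      · intro k hk
        simp only [Finset.mem_range] at hk
        show n - k ∈ Finset.Icc 1 n
        exact Finset.mem_Icc.mpr (by omega)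
      · intro i hi
        simp only [Finset.mem_Icc] at hi
        show n - (n - i) = i
        omega
      · intro k hk
        simp only [Finset.mem_range] at hk
        show n - (n - k) = k
        omega
      · intro i hi
        rfl
    rw [hsum]
    have := heval
    rw [Polynomial.eval_eq_sum_range, Finset.sum_range_succ, hmonic.coeff_natDegree] at this
    rw [add_comm]
    simpa using this
end

section
/- In R = k[[t^2, t^5]] with maximal ideal m = (t^2, t^5), for every n ≥ 4 one has (m·(t^n) : m) = (t^n, t^{n+3}) as ideals of R. -/
/-- The subalgebra of `k[[t]]` of power series supported on the numerical semigroup `S`. -/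
def sgRing (k : Type*) [Field k] (S : AddSubmonoid ℕ) : Subalgebra k (PowerSeries k) where
  carrier := {f | ∀ n, PowerSeries.coeff n f ≠ 0 → n ∈ S}
  zero_mem' := by intro n hn; simp at hn
  one_mem' := by
    intro n hn
    rw [PowerSeries.coeff_one] at hn
    split_ifs at hn with h
    · exact h ▸ S.zero_mem
    · simp at hn
  add_mem' := by
    intro a b ha hb n hn
    rw [map_add] at hn
    by_cases h : PowerSeries.coeff n a ≠ 0
    · exact ha n h
    · push_neg at h
      exact hb n (by simpa [h] using hn)
  mul_mem' := by
    intro a b ha hb n hn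
    rw [PowerSeries.coeff_mul] at hn
    obtain ⟨p, hp, hne⟩ := Finset.exists_ne_zero_of_sum_ne_zero hn
    rw [Finset.HasAntidiagonal.mem_antidiagonal] at hp
    exact hp ▸ S.add_mem (ha p.1 (left_ne_zero_of_mul hne)) (hb p.2 (right_ne_zero_of_mul hne))
  algebraMap_mem' := by
    intro r n hn
    rw [show (algebraMap k (PowerSeries k)) r = PowerSeries.C r from rfl, PowerSeries.coeff_C] at hn
    split_ifs at hn with h
    · exact h ▸ S.zero_mem
    · simp at hn

/-- The monomial `t^n` as an element of the semigroup ring, for `n ∈ S`. -/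
noncomputable def tp {k : Type*} [Field k] {S : AddSubmonoid ℕ} (n : ℕ) (hn : n ∈ S) : sgRing k S :=
  ⟨PowerSeries.X ^ n, by
    intro m hm
    rw [PowerSeries.coeff_X_pow] at hm
    split_ifs at hm with h
    · exact h ▸ hn
    · simp at hm⟩

/-- The numerical semigroup generated by 2 and 5. -/
def S25 : AddSubmonoid ℕ := AddSubmonoid.closure {2, 5}

lemma two_mem_S25 : (2 : ℕ) ∈ S25 := AddSubmonoid.subset_closure (by simp)
lemma five_mem_S25 : (5 : ℕ) ∈ S25 := AddSubmonoid.subset_closure (by simp)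

lemma mem_S25_of_four_le {n : ℕ} (h : 4 ≤ n) : n ∈ S25 := by
  have h2k : ∀ c : ℕ, c * 2 ∈ S25 := fun c => by
    simpa [smul_eq_mul] using AddSubmonoid.nsmul_mem S25 two_mem_S25 c
  rcases Nat.even_or_odd n with he | ho
  · obtain ⟨c, hc⟩ := he
    have hn : n = c * 2 := by omega
    rw [hn]; exact h2k c
  · obtain ⟨c, hc⟩ := ho
    have hn : n = (c - 2) * 2 + 5 := by omega
    rw [hn]; exact S25.add_mem (h2k _) five_mem_S25

lemma S25_prop {n : ℕ} (h : n ∈ S25) : n = 0 ∨ (2 ≤ n ∧ n ≠ 3) :=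
  AddSubmonoid.closure_induction
    (fun x hx => by simp only [Set.mem_insert_iff, Set.mem_singleton_iff] at hx; omega)
    (Or.inl rfl) (fun x y _ _ hx hy => by omega) h

lemma mem_S25_iff {n : ℕ} : n ∈ S25 ↔ n ≠ 1 ∧ n ≠ 3 := by
  constructor
  · intro h; have := S25_prop h; omega
  · rintro ⟨h1, h3⟩
    have : n = 0 ∨ n = 2 ∨ 4 ≤ n := by omega
    rcases this with rfl | rfl | h
    · exact S25.zero_mem
    · exact two_mem_S25
    · exact mem_S25_of_four_le h

lemma tp_val {k : Type*} [Field k] {S : AddSubmonoid ℕ} (n : ℕ) (hn : n ∈ S) :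
    ((tp (k := k) n hn : sgRing k S) : PowerSeries k) = PowerSeries.X ^ n := rfl

lemma span_pair_coeff {k : Type*} [Field k] {a b : ℕ} (ha : a ∈ S25) (hb : b ∈ S25)
    {x : sgRing k S25} (hx : x ∈ Ideal.span {tp a ha, tp b hb}) (j : ℕ)
    (hj : PowerSeries.coeff j (x : PowerSeries k) ≠ 0) :
    (∃ s ∈ S25, j = s + a) ∨ ∃ s ∈ S25, j = s + b := by
  obtain ⟨p, q, hpq⟩ := Ideal.mem_span_pair.mp hx
  rw [← hpq] at hj
  have hj' : PowerSeries.coeff j ((p : PowerSeries k) * PowerSeries.X ^ a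
      + (q : PowerSeries k) * PowerSeries.X ^ b) ≠ 0 := hj
  rw [map_add] at hj'
  have hor : PowerSeries.coeff j ((p : PowerSeries k) * PowerSeries.X ^ a) ≠ 0 ∨
      PowerSeries.coeff j ((q : PowerSeries k) * PowerSeries.X ^ b) ≠ 0 := by
    by_contra h; push_neg at h; rw [h.1, h.2, add_zero] at hj'; exact hj' rfl
  rcases hor with h | h
  · rw [PowerSeries.coeff_mul_X_pow'] at h
    split_ifs at h with hle
    · exact Or.inl ⟨j - a, p.2 _ h, by omega⟩
    · exact absurd rfl h
  · rw [PowerSeries.coeff_mul_X_pow'] at h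
    split_ifs at h with hle
    · exact Or.inr ⟨j - b, q.2 _ h, by omega⟩
    · exact absurd rfl h

set_option maxHeartbeats 1000000 in
set_option synthInstance.maxHeartbeats 400000 in
/-- In `R = k[[t^2, t^5]]` with maximal ideal `m = (t^2, t^5)`, for every `n ≥ 4`,
`(m·(t^n) : m) = (t^n, t^{n+3})`. -/
theorem sgRing_two_five_colon_eq {k : Type*} [Field k] (n : ℕ) (hn : 4 ≤ n)
    (m I J : Ideal (sgRing k S25))
    (hm : m = Ideal.span {tp 2 two_mem_S25, tp 5 five_mem_S25})
    (hI : I = Ideal.span {tp n (mem_S25_of_four_le hn)})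
    (hJ : J = Ideal.span {tp n (mem_S25_of_four_le hn),
      tp (n + 3) (mem_S25_of_four_le (by omega))}) :
    (m * I).colon m = J := by
  classical
  apply le_antisymm
  · -- (m*I : m) ≤ J
    intro f hf
    have ht2m : tp (k := k) 2 two_mem_S25 ∈ m := by
      rw [hm]; exact Ideal.subset_span (by simp)
    have hft2 : f * tp 2 two_mem_S25 ∈ m * I := by
      have := Submodule.mem_colon.mp hf _ ht2m
      rwa [smul_eq_mul] at this
    have h2' : n + 2 ∈ S25 := mem_S25_of_four_le (by omega)
    have h5' : n + 5 ∈ S25 := mem_S25_of_four_le (by omega)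
    have hle : m * I ≤ Ideal.span {tp (k := k) (n + 2) h2', tp (n + 5) h5'} := by
      rw [hm, hI]
      refine Ideal.mul_le.mpr fun r hr s hs => ?_
      obtain ⟨p, q, hpq⟩ := Ideal.mem_span_pair.mp hr
      obtain ⟨c, hc⟩ := Ideal.mem_span_singleton.mp hs
      rw [Ideal.mem_span_pair]
      refine ⟨p * c, q * c, ?_⟩
      apply Subtype.ext
      rw [← hpq, hc]
      show (p : PowerSeries k) * (c : PowerSeries k) * (PowerSeries.X ^ (n + 2))
          + (q : PowerSeries k) * (c : PowerSeries k) * (PowerSeries.X ^ (n + 5))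
          = ((p : PowerSeries k) * PowerSeries.X ^ 2 + (q : PowerSeries k) * PowerSeries.X ^ 5)
            * (PowerSeries.X ^ n * (c : PowerSeries k))
      ring
    have hsupp : ∀ j, PowerSeries.coeff j (f : PowerSeries k) ≠ 0 → n ≤ j ∧ j ≠ n + 1 := by
      intro j hj
      have hj2 : PowerSeries.coeff (j + 2)
          ((f : PowerSeries k) * PowerSeries.X ^ 2) ≠ 0 := by
        rwa [PowerSeries.coeff_mul_X_pow]
      have := span_pair_coeff h2' h5' (hle hft2) (j + 2) hj2
      rcases this with ⟨s, hs, hse⟩ | ⟨s, hs, hse⟩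
      · have hs' := mem_S25_iff.mp hs; omega
      · omega
    set F := (f : PowerSeries k) with hF
    set c := PowerSeries.coeff (n + 3) F with hc
    have hdvd : (PowerSeries.X : PowerSeries k) ^ n ∣
        F - PowerSeries.C c * PowerSeries.X ^ (n + 3) := by
      rw [PowerSeries.X_pow_dvd_iff]
      intro j hjn
      rw [map_sub]
      have h1 : PowerSeries.coeff j F = 0 := by
        by_contra h; exact absurd (hsupp j h).1 (by omega)
      rw [h1, PowerSeries.coeff_C_mul_X_pow, if_neg (by omega), sub_zero]
    obtain ⟨g, hg⟩ := hdvd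
    have hgc : ∀ j, PowerSeries.coeff j g = PowerSeries.coeff (j + n)
        (F - PowerSeries.C c * PowerSeries.X ^ (n + 3)) := by
      intro j; rw [hg, PowerSeries.coeff_X_pow_mul]
    have hgS : ∀ j, PowerSeries.coeff j g ≠ 0 → j ∈ S25 := by
      intro j hj
      rw [hgc, map_sub, PowerSeries.coeff_C_mul_X_pow] at hj
      rw [mem_S25_iff]
      constructor
      · rintro rfl
        rw [if_neg (by omega), sub_zero] at hj
        exact (hsupp _ hj).2 (by omega)
      · rintro rfl
        rw [if_pos (by omega)] at hj
        exact hj (by rw [show 3 + n = n + 3 from by omega, ← hc, sub_self])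
    rw [hJ, Ideal.mem_span_pair]
    refine ⟨⟨g, hgS⟩, ⟨PowerSeries.C c, fun j hj => ?_⟩, ?_⟩
    · rw [PowerSeries.coeff_C] at hj
      split_ifs at hj with h
      · exact h ▸ S25.zero_mem
      · exact absurd rfl hj
    · apply Subtype.ext
      show g * PowerSeries.X ^ n + PowerSeries.C c * PowerSeries.X ^ (n + 3) = F
      have hF' : F = PowerSeries.X ^ n * g
          + PowerSeries.C c * PowerSeries.X ^ (n + 3) := by
        rw [← hg]; ring
      rw [hF']; ring
  · -- J ≤ (m*I : m)
    intro x hx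
    rw [hJ, Ideal.mem_span_pair] at hx
    obtain ⟨a, b, hab⟩ := hx
    rw [Submodule.mem_colon]
    intro p hp
    rw [smul_eq_mul]
    rw [hm, SetLike.mem_coe, Ideal.mem_span_pair] at hp
    obtain ⟨u, v, huv⟩ := hp
    have h1 : tp (k := k) 2 two_mem_S25 * tp n (mem_S25_of_four_le hn) ∈ m * I := by
      rw [hm, hI]
      exact Ideal.mul_mem_mul (Ideal.subset_span (by simp)) (Ideal.subset_span (by simp))
    have h2 : tp (k := k) 5 five_mem_S25 * tp n (mem_S25_of_four_le hn) ∈ m * I := by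
      rw [hm, hI]
      exact Ideal.mul_mem_mul (Ideal.subset_span (by simp)) (Ideal.subset_span (by simp))
    have h6 : (6 : ℕ) ∈ S25 := mem_S25_of_four_le (by omega)
    have key : x * p =
        (a * u) * (tp 2 two_mem_S25 * tp n (mem_S25_of_four_le hn))
        + (a * v + b * u) * (tp 5 five_mem_S25 * tp n (mem_S25_of_four_le hn))
        + (b * v * tp 6 h6) * (tp 2 two_mem_S25 * tp n (mem_S25_of_four_le hn)) := by
      apply Subtype.ext
      rw [← hab, ← huv]
      show ((a : PowerSeries k) * PowerSeries.X ^ n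
              + (b : PowerSeries k) * PowerSeries.X ^ (n + 3))
            * ((u : PowerSeries k) * PowerSeries.X ^ 2
              + (v : PowerSeries k) * PowerSeries.X ^ 5)
          = (a : PowerSeries k) * (u : PowerSeries k)
              * (PowerSeries.X ^ 2 * PowerSeries.X ^ n)
            + ((a : PowerSeries k) * (v : PowerSeries k)
                + (b : PowerSeries k) * (u : PowerSeries k))
              * (PowerSeries.X ^ 5 * PowerSeries.X ^ n)
            + (b : PowerSeries k) * (v : PowerSeries k) * PowerSeries.X ^ 6
              * (PowerSeries.X ^ 2 * PowerSeries.X ^ n)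
      ring
    rw [key]
    exact add_mem (add_mem (Ideal.mul_mem_left _ _ h1) (Ideal.mul_mem_left _ _ h2))
      (Ideal.mul_mem_left _ _ h1)
end

section
/- Let k = (ℤ/3ℤ)(u,v,w) and R = k[[x,y,z]]/(ux^3 + vy^3 + wz^3). Then x^3 y^3 ∈ (x^4, y^4, z^4) in R; explicitly x^3 y^3 = (u/v) x^6 + (v/u) y^6 + 2(w^2/(uv)) z^6 modulo the defining relation. -/
/-- The field `(ℤ/3ℤ)(u,v,w)`. -/
abbrev K3 : Type := FractionRing (MvPolynomial (Fin 3) (ZMod 3))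

/-- The indeterminates `u, v, w` viewed inside `(ℤ/3ℤ)(u,v,w)`. -/
noncomputable def uvw (i : Fin 3) : K3 :=
  algebraMap (MvPolynomial (Fin 3) (ZMod 3)) K3 (MvPolynomial.X i)

/-- The defining relation `u x³ + v y³ + w z³` in `K[[x,y,z]]`. -/
noncomputable def rel3 : MvPowerSeries (Fin 3) K3 :=
  MvPowerSeries.C (σ := Fin 3) (R := K3) (uvw 0) * MvPowerSeries.X 0 ^ 3 +
    MvPowerSeries.C (σ := Fin 3) (R := K3) (uvw 1) * MvPowerSeries.X 1 ^ 3 +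
    MvPowerSeries.C (σ := Fin 3) (R := K3) (uvw 2) * MvPowerSeries.X 2 ^ 3

set_option maxHeartbeats 1000000 in
/-- In `R = (ℤ/3ℤ)(u,v,w)[[x,y,z]]/(ux³+vy³+wz³)` one has
`x³y³ = (u/v)x⁶ + (v/u)y⁶ + 2(w²/(uv))z⁶`, and in particular `x³y³ ∈ (x⁴, y⁴, z⁴)`. -/
theorem cube_cube_mem_span_fourth_powers :
    (Ideal.Quotient.mk (Ideal.span {rel3}) (MvPowerSeries.X 0 ^ 3 * MvPowerSeries.X 1 ^ 3) =
        Ideal.Quotient.mk (Ideal.span {rel3})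
          (MvPowerSeries.C (σ := Fin 3) (R := K3) (uvw 0 / uvw 1) * MvPowerSeries.X 0 ^ 6 +
            MvPowerSeries.C (σ := Fin 3) (R := K3) (uvw 1 / uvw 0) * MvPowerSeries.X 1 ^ 6 +
            MvPowerSeries.C (σ := Fin 3) (R := K3) (2 * uvw 2 ^ 2 / (uvw 0 * uvw 1)) *
              MvPowerSeries.X 2 ^ 6)) ∧
      Ideal.Quotient.mk (Ideal.span {rel3}) (MvPowerSeries.X 0 ^ 3 * MvPowerSeries.X 1 ^ 3) ∈
        Ideal.span {Ideal.Quotient.mk (Ideal.span {rel3}) (MvPowerSeries.X 0 ^ 4),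
          Ideal.Quotient.mk (Ideal.span {rel3}) (MvPowerSeries.X 1 ^ 4),
          Ideal.Quotient.mk (Ideal.span {rel3}) (MvPowerSeries.X 2 ^ 4)} := by
  have hinj := IsFractionRing.injective (MvPolynomial (Fin 3) (ZMod 3)) K3
  have hne : ∀ i : Fin 3, uvw i ≠ 0 := fun i => by
    simpa [uvw] using (map_ne_zero_iff _ hinj).mpr (MvPolynomial.X_ne_zero (R := ZMod 3) (n := i))
  haveI : CharP K3 3 := charP_of_injective_algebraMap hinj 3
  have h3 : (3 : K3) = 0 := by exact_mod_cast CharP.cast_eq_zero K3 3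
  set u := uvw 0 with hu'; set v := uvw 1 with hv'; set w := uvw 2 with hw'
  have hu := hne 0; have hv := hne 1
  rw [← hu'] at hu; rw [← hv'] at hv
  set s : K3 := 2 / (u * v) with hs_def
  have hsm : s * (u * v) = 2 := div_mul_cancel₀ 2 (mul_ne_zero hu hv)
  have hs : 2 * s * u * v = 1 := by linear_combination 2 * hsm + h3
  have ha : u / v = -s * u ^ 2 := by
    rw [div_eq_iff hv]; linear_combination u * hsm + u * h3
  have hb : v / u = -s * v ^ 2 := by
    rw [div_eq_iff hu]; linear_combination v * hsm + v * h3
  have hc : 2 * w ^ 2 / (u * v) = s * w ^ 2 := by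
    rw [hs_def]; ring
  set CC := MvPowerSeries.C (σ := Fin 3) (R := K3) with hCC
  have hs' : (2 : MvPowerSeries (Fin 3) K3) * CC s * CC u * CC v = 1 := by
    have := congrArg CC hs
    simpa only [map_mul, map_one, map_ofNat] using this
  have h1 : Ideal.Quotient.mk (Ideal.span {rel3})
      (MvPowerSeries.X 0 ^ 3 * MvPowerSeries.X 1 ^ 3) =
      Ideal.Quotient.mk (Ideal.span {rel3})
        (CC (u / v) * MvPowerSeries.X 0 ^ 6 +
          CC (v / u) * MvPowerSeries.X 1 ^ 6 +
          CC (2 * w ^ 2 / (u * v)) * MvPowerSeries.X 2 ^ 6) := by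
    rw [ha, hb, hc, Ideal.Quotient.eq, Ideal.mem_span_singleton]
    refine ⟨CC s * (CC (2 * u) * MvPowerSeries.X 0 ^ 3 +
      CC (2 * v) * MvPowerSeries.X 1 ^ 3) - CC s * rel3, ?_⟩
    simp only [rel3, ← hCC, map_mul, map_neg, map_pow, map_ofNat]
    linear_combination (-(MvPowerSeries.X (R := K3) 0 ^ 3 * MvPowerSeries.X 1 ^ 3)) * hs'
  refine ⟨h1, ?_⟩
  rw [h1, RingHom.map_add, RingHom.map_add]
  refine Ideal.add_mem _ (Ideal.add_mem _ ?_ ?_) ?_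
  · have e : CC (u / v) * MvPowerSeries.X (R := K3) 0 ^ 6 =
        (CC (u / v) * MvPowerSeries.X 0 ^ 2) * MvPowerSeries.X 0 ^ 4 := by ring
    rw [e, map_mul]
    exact Ideal.mul_mem_left _ _ (Ideal.subset_span (by simp))
  · have e : CC (v / u) * MvPowerSeries.X (R := K3) 1 ^ 6 =
        (CC (v / u) * MvPowerSeries.X 1 ^ 2) * MvPowerSeries.X 1 ^ 4 := by ring
    rw [e, map_mul]
    exact Ideal.mul_mem_left _ _ (Ideal.subset_span (by simp))
  · have e : CC (2 * w ^ 2 / (u * v)) * MvPowerSeries.X (R := K3) 2 ^ 6 =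
        (CC (2 * w ^ 2 / (u * v)) * MvPowerSeries.X 2 ^ 2) * MvPowerSeries.X 2 ^ 4 := by ring
    rw [e, map_mul]
    exact Ideal.mul_mem_left _ _ (Ideal.subset_span (by simp))
end
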